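/- Let A, B, C be n×n Hermitian positive definite matrices such that e_k(λ(AC^{−1})) ≤ e_k(λ(BC^{−1})) for k = 1,…,n−1 and det(AC^{−1}) = det(BC^{−1}). Then δ_S(A,C) ≤ δ_S(B,C), where the S-divergence is δ_S(X,Y) = log det((X+Y)/2) − (1/2) log det(XY). -/

import Mathlib

open Finset Real Matrix
open scoped ComplexOrder

noncomputable def Matrix.PosSemidef.sqrt {n 𝕜 : Type*} [Fintype n] [RCLike 𝕜] [DecidableEq n]
    {A : Matrix n n 𝕜} (hA : A.PosSemidef) : Matrix n n 𝕜 :=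
  hA.1.eigenvectorUnitary.1 * diagonal ((↑) ∘ (√·) ∘ hA.1.eigenvalues) *
  (star hA.1.eigenvectorUnitary : Matrix n n 𝕜)

noncomputable def esymm (n k : ℕ) (x : Fin n → ℝ) : ℝ :=
  ∑ s ∈ Finset.powersetCard k (Finset.univ : Finset (Fin n)), ∏ i ∈ s, x i

lemma Matrix.PosSemidef.posSemidef_sqrt {n 𝕜 : Type*} [Fintype n] [RCLike 𝕜] [DecidableEq n]
    {A : Matrix n n 𝕜} (hA : A.PosSemidef) : hA.sqrt.PosSemidef := by
  unfold Matrix.PosSemidef.sqrt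
  have hd : (diagonal ((↑) ∘ (√·) ∘ hA.1.eigenvalues) : Matrix n n 𝕜).PosSemidef :=
    PosSemidef.diagonal (fun i => by
      simp only [Function.comp]
      exact RCLike.ofReal_nonneg.mpr (Real.sqrt_nonneg _))
  rw [star_eq_conjTranspose]
  exact hd.mul_mul_conjTranspose_same _

lemma Matrix.PosSemidef.sqrt_mul_self {n 𝕜 : Type*} [Fintype n] [RCLike 𝕜] [DecidableEq n]
    {A : Matrix n n 𝕜} (hA : A.PosSemidef) : hA.sqrt * hA.sqrt = A := by
  unfold Matrix.PosSemidef.sqrt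
  set U : Matrix n n 𝕜 := hA.1.eigenvectorUnitary.1 with hUdef
  set D : Matrix n n 𝕜 := diagonal ((↑) ∘ (√·) ∘ hA.1.eigenvalues) with hDdef
  have hUs : star U * U = 1 := (Matrix.mem_unitaryGroup_iff').mp hA.1.eigenvectorUnitary.2
  have hDD : D * D = diagonal (RCLike.ofReal ∘ hA.1.eigenvalues) := by
    rw [hDdef, diagonal_mul_diagonal]
    congr 1
    funext i
    simp only [Function.comp]
    rw [← RCLike.ofReal_mul, Real.mul_self_sqrt (hA.eigenvalues_nonneg i)]
  have e : U * D * star U * (U * D * star U) = U * D * (star U * U) * D * star U := by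
    simp only [Matrix.mul_assoc]
  rw [e, hUs, Matrix.mul_one, Matrix.mul_assoc U D D, hDD]
  conv_rhs => rw [hA.1.spectral_theorem]
  rfl

/-- The S-divergence `δ_S(X,Y) = log det((X+Y)/2) − (1/2) log det(XY)` for positive definite
matrices; the determinants involved are positive reals, so we take real parts. -/
noncomputable def deltaS (n : ℕ) (X Y : Matrix (Fin n) (Fin n) ℂ) : ℝ :=
  Real.log (((1 / 2 : ℂ) • (X + Y)).det).re - (1 / 2) * Real.log ((X * Y).det).re

lemma det_one_add_eq {m : Type*} [Fintype m] [DecidableEq m] {M : Matrix m m ℂ}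
    (hM : M.IsHermitian) :
    (1 + M).det = ∏ i, (1 + (hM.eigenvalues i : ℂ)) := by
  have hU : (hM.eigenvectorUnitary : Matrix m m ℂ) * star (hM.eigenvectorUnitary : Matrix m m ℂ)
      = 1 := (Matrix.mem_unitaryGroup_iff).mp hM.eigenvectorUnitary.2
  have key : 1 + M =
      (hM.eigenvectorUnitary : Matrix m m ℂ) *
        (1 + diagonal (RCLike.ofReal ∘ hM.eigenvalues)) *
        star (hM.eigenvectorUnitary : Matrix m m ℂ) := by
    rw [mul_add, mul_one, add_mul, hU, ← Unitary.conjStarAlgAut_apply (S := ℂ), ← hM.spectral_theorem]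
  rw [key, det_mul_right_comm, hU, one_mul, ← Matrix.diagonal_one, diagonal_add, det_diagonal]
  simp [Function.comp]

lemma prod_one_add_eq (n : ℕ) (x : Fin n → ℝ) :
    ∏ i, (1 + x i) = ∑ k ∈ Finset.range (n + 1), esymm n k x := by
  simp_rw [add_comm (1 : ℝ)]
  rw [Finset.prod_add]
  simp only [Finset.prod_const_one, mul_one]
  rw [Finset.sum_powerset]
  simp [esymm, Finset.card_univ]

lemma esymm_zero' (n : ℕ) (x : Fin n → ℝ) : esymm n 0 x = 1 := by simp [esymm]

lemma esymm_top' (n : ℕ) (x : Fin n → ℝ) : esymm n n x = ∏ i, x i := by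
  have h : Finset.powersetCard n (Finset.univ : Finset (Fin n)) = {Finset.univ} := by
    simpa using Finset.powersetCard_self (Finset.univ : Finset (Fin n))
  rw [esymm, h, Finset.sum_singleton]

lemma esymm_nonneg' (n k : ℕ) (x : Fin n → ℝ) (hx : ∀ i, 0 ≤ x i) : 0 ≤ esymm n k x :=
  Finset.sum_nonneg fun s _ => Finset.prod_nonneg fun i _ => hx i

set_option maxHeartbeats 1000000 in
theorem stmt_14 (n : ℕ) (A B C : Matrix (Fin n) (Fin n) ℂ)
    (hA : A.PosDef) (hB : B.PosDef) (hC : C.PosDef)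
    (hHA : ((hC.inv.posSemidef.sqrt) * A * (hC.inv.posSemidef.sqrt)).IsHermitian)
    (hHB : ((hC.inv.posSemidef.sqrt) * B * (hC.inv.posSemidef.sqrt)).IsHermitian)
    (hE : ∀ k, 1 ≤ k → k ≤ n - 1 →
      esymm n k hHA.eigenvalues ≤ esymm n k hHB.eigenvalues)
    (hdet : (A * C⁻¹).det = (B * C⁻¹).det) :
    deltaS n A C ≤ deltaS n B C := by
  set S : Matrix (Fin n) (Fin n) ℂ := hC.inv.posSemidef.sqrt with hSdef
  have hSps : S.PosSemidef := hC.inv.posSemidef.posSemidef_sqrt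
  have hSS : S * S = C⁻¹ := hC.inv.posSemidef.sqrt_mul_self
  have hCdet : (0 : ℂ) < C.det := hC.det_pos
  have hCinvdet : (0 : ℂ) < (C⁻¹).det := hC.inv.det_pos
  have hSdet0 : S.det ≠ 0 := fun h => hCinvdet.ne' (by rw [← hSS, det_mul, h, mul_zero])
  have hSu : IsUnit S.det := isUnit_iff_ne_zero.mpr hSdet0
  have hC1 : C = S⁻¹ * S⁻¹ := by
    rw [← Matrix.mul_inv_rev, hSS,
      Matrix.nonsing_inv_nonsing_inv _ (isUnit_iff_ne_zero.mpr hCdet.ne')]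
  have hSCS : S * C * S = 1 := by
    rw [hC1]
    simp only [Matrix.mul_assoc, Matrix.nonsing_inv_mul _ hSu, Matrix.mul_one]
    exact Matrix.mul_nonsing_inv _ hSu
  -- determinant of X + C via eigenvalues of S X S
  have key : ∀ (X : Matrix (Fin n) (Fin n) ℂ) (hH : (S * X * S).IsHermitian),
      (X + C).det = C.det * ((∏ i, (1 + hH.eigenvalues i) : ℝ) : ℂ) := by
    intro X hH
    have h1 : S * (X + C) * S = 1 + S * X * S := by
      rw [mul_add, add_mul, hSCS, add_comm]
    have h2 := congrArg det h1
    rw [det_mul, det_mul, det_one_add_eq hH] at h2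
    have h3 : S.det * S.det = (C.det)⁻¹ := by
      rw [← det_mul, hSS, Matrix.det_nonsing_inv, Ring.inverse_eq_inv']
    have h5 : C.det * (S.det * S.det) = 1 := by rw [h3, mul_inv_cancel₀ hCdet.ne']
    have h6 : (X + C).det = C.det * ∏ i, (1 + (hH.eigenvalues i : ℂ)) := by
      calc (X + C).det = C.det * (S.det * S.det) * (X + C).det := by rw [h5, one_mul]
        _ = C.det * (S.det * (X + C).det * S.det) := by ring
        _ = C.det * ∏ i, (1 + (hH.eigenvalues i : ℂ)) := by rw [h2]
    rw [h6]
    norm_cast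
  -- real positivity of det C
  have hcim : (C.det).im = 0 := by
    have := (Complex.lt_def.mp hCdet).2
    simpa using this.symm
  have hcre : 0 < (C.det).re := (Complex.lt_def.mp hCdet).1
  have hCre : C.det = ((C.det).re : ℂ) := Complex.ext rfl (by simp [hcim])
  set c : ℝ := (C.det).re with hc
  clear_value c
  -- eigenvalues nonneg
  have hApsd : (S * A * S).PosSemidef := by
    have := hA.posSemidef.conjTranspose_mul_mul_same S
    rwa [hSps.1] at this
  have hBpsd : (S * B * S).PosSemidef := by
    have := hB.posSemidef.conjTranspose_mul_mul_same S
    rwa [hSps.1] at this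
  have hμA : ∀ i, 0 ≤ hHA.eigenvalues i := fun i => hApsd.eigenvalues_nonneg i
  have hμB : ∀ i, 0 ≤ hHB.eigenvalues i := fun i => hBpsd.eigenvalues_nonneg i
  set pA : ℝ := ∑ k ∈ Finset.range (n + 1), esymm n k hHA.eigenvalues with hpA
  set pB : ℝ := ∑ k ∈ Finset.range (n + 1), esymm n k hHB.eigenvalues with hpB
  clear_value pA pB
  have hpA1 : 1 ≤ pA := by
    rw [hpA]
    calc (1 : ℝ) = esymm n 0 hHA.eigenvalues := (esymm_zero' n _).symm
      _ ≤ _ := Finset.single_le_sum (f := fun k => esymm n k hHA.eigenvalues)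
          (fun k _ => esymm_nonneg' n k _ hμA) (by simp)
  -- det A = det B
  have hAB : A.det = B.det := by
    apply mul_right_cancel₀ hCinvdet.ne'
    rw [← det_mul, ← det_mul, hdet]
  -- product of eigenvalues equal
  have hprodAB : ∏ i, hHA.eigenvalues i = ∏ i, hHB.eigenvalues i := by
    have e1 : ((∏ i, hHA.eigenvalues i : ℝ) : ℂ) = (S * A * S).det := by
      rw [hHA.det_eq_prod_eigenvalues, Complex.ofReal_prod]; rfl
    have e2 : ((∏ i, hHB.eigenvalues i : ℝ) : ℂ) = (S * B * S).det := by
      rw [hHB.det_eq_prod_eigenvalues, Complex.ofReal_prod]; rfl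
    have e3 : (S * A * S).det = (S * B * S).det := by
      rw [det_mul, det_mul, det_mul, det_mul, hAB]
    exact_mod_cast e1.trans (e3.trans e2.symm)
  have hpAB : pA ≤ pB := by
    rw [hpA, hpB]
    apply Finset.sum_le_sum
    intro k hk
    by_cases hk0 : k = 0
    · simp [hk0, esymm_zero']
    by_cases hkn : k = n
    · subst hkn
      rw [esymm_top', esymm_top', hprodAB]
    · exact hE k (Nat.one_le_iff_ne_zero.mpr hk0)
        (Nat.le_sub_one_of_lt (lt_of_le_of_ne (Nat.lt_succ_iff.mp (Finset.mem_range.mp hk)) hkn))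
  -- re of the scaled determinants
  have hre : ∀ (X : Matrix (Fin n) (Fin n) ℂ) (hH : (S * X * S).IsHermitian),
      (((1 / 2 : ℂ)) • (X + C)).det.re
        = (1 / 2 : ℝ) ^ n * (c * ∑ k ∈ Finset.range (n + 1), esymm n k hH.eigenvalues) := by
    intro X hH
    rw [Matrix.det_smul, key X hH, Fintype.card_fin, ← prod_one_add_eq]
    rw [hCre]
    have h12 : ((1 / 2 : ℂ)) ^ n = (((1 / 2 : ℝ) ^ n : ℝ) : ℂ) := by push_cast; ring
    rw [h12, ← Complex.ofReal_mul, ← Complex.ofReal_mul, Complex.ofReal_re]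
  have hreA := hre A hHA
  have hreB := hre B hHB
  rw [← hpA] at hreA
  rw [← hpB] at hreB
  have hposA : 0 < (((1 / 2 : ℂ)) • (A + C)).det.re := by
    rw [hreA]
    have h0 : (0:ℝ) < pA := lt_of_lt_of_le one_pos hpA1
    positivity
  unfold deltaS
  have h2nd : (A * C).det = (B * C).det := by rw [det_mul, det_mul, hAB]
  rw [h2nd]
  apply sub_le_sub_right
  apply Real.log_le_log hposA
  rw [hreA, hreB]
  have h12 : (0:ℝ) ≤ (1 / 2 : ℝ) ^ n := by positivity
  exact mul_le_mul_of_nonneg_left (mul_le_mul_of_nonneg_left hpAB hcre.le) h12
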